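/- Let q ≥ 1, let 1 ≤ a < b ≤ q with a + b = q + 1, and let H ⊆ Q(n,2) be a q-graph containing no (q+1)-copy of the triangle C₃. Then the directed graph H⃗_{a,b} (with arc (i,j) whenever the q-edge with support {i,j}, value a at i and b at j, lies in H) has at most 2·⌊n²/4⌋ arcs. -/

import Mathlib

open Finset

/-- The support of a vector: indices of nonzero entries. -/
def qsupport {n : ℕ} (x : Fin n → ℕ) : Finset (Fin n) :=
  Finset.univ.filter (fun i => x i ≠ 0)

/-- `Qset q n` : all q-edges, i.e. vectors in `{0,…,q}^n` with exactly two nonzero entries. -/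
def Qset (q n : ℕ) : Finset (Fin n → ℕ) :=
  ((Finset.univ : Finset (Fin n → Fin (q+1))).image (fun f i => (f i : ℕ))).filter
    (fun x => (qsupport x).card = 2)

/-- The q-edge with support `{i,j}`, value `a` at `i` and `b` at `j`. -/
def qedge {n : ℕ} (i j : Fin n) (a b : ℕ) : Fin n → ℕ :=
  fun k => if k = i then a else if k = j then b else 0

/-- `H` is an `s`-copy of the graph `F`. -/
def IsSCopy {α : Type} [Fintype α] (s : ℕ) (F : SimpleGraph α) {n : ℕ}
    (H : Finset (Fin n → ℕ)) : Prop :=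
  ∃ ι : α → Fin n, Function.Injective ι ∧
    (∀ u v : α, F.Adj u v ↔ ∃ x ∈ H, qsupport x = {ι u, ι v}) ∧
    H.card = Nat.card F.edgeSet ∧
    ∀ x ∈ H, ∀ y ∈ H, x ≠ y → ∀ i, x i ≠ 0 → y i ≠ 0 → s ≤ x i + y i

/-- `H` contains an `s`-copy of `F`. -/
def ContainsSCopy {α : Type} [Fintype α] (s : ℕ) (F : SimpleGraph α) {n : ℕ}
    (H : Finset (Fin n → ℕ)) : Prop :=
  ∃ H' ⊆ H, IsSCopy s F H'

/-- The ordinary Turán number `ex(n,F)`. -/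
noncomputable def exNum {α : Type} [Fintype α] (n : ℕ) (F : SimpleGraph α) : ℕ :=
  sSup {m | ∃ G : SimpleGraph (Fin n),
    (¬ ∃ φ : F →g G, Function.Injective φ) ∧ m = Nat.card G.edgeSet}

/-- The Turán number `ex(n,F,q,s)`. -/
noncomputable def exQ {α : Type} [Fintype α] (n : ℕ) (F : SimpleGraph α) (q s : ℕ) : ℕ :=
  sSup {m | ∃ H ⊆ Qset q n, ¬ ContainsSCopy s F H ∧ m = H.card}

section Aux

lemma arith1 (m c c' : ℕ) (h2 : 2 ≤ m) (h1 : c' ≤ 2*((m-2)^2/4)) (h : c ≤ c' + 2*(m-2) + 2) :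
    c ≤ 2*(m^2/4) := by
  obtain ⟨k, rfl⟩ : ∃ k, m = k + 2 := ⟨m-2, by omega⟩
  have hm : (k+2)^2 = k^2 + 4*k+4 := by ring
  simp only [Nat.add_sub_cancel] at h1 h
  rw [hm]
  generalize k^2 = x at *
  omega

lemma arith2 (m c : ℕ) (h : 2*c ≤ m*m - m) : c ≤ 2*(m^2/4) := by
  rcases Nat.even_or_odd m with ⟨t, rfl⟩ | ⟨t, rfl⟩
  · have h1 : (t+t)^2 = 4*(t*t) := by ring
    have h2 : (t+t)*(t+t) = 4*(t*t) := by ring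
    rw [h1]; rw [h2] at h
    generalize t*t = x at *
    omega
  · have h1 : (2*t+1)^2 = 4*(t*t)+4*t+1 := by ring
    have h2 : (2*t+1)*(2*t+1) = 4*(t*t)+4*t+1 := by ring
    rw [h1]; rw [h2] at h
    generalize t*t = x at *
    omega

variable {α : Type*} [DecidableEq α]

lemma Tfilter_card (R : α → α → Prop) [DecidableRel R] (u i j : α)
    (hui : u ≠ i) (huj : u ≠ j) (hij : i ≠ j)
    (h1 : ¬(R u i ∧ R j u)) (h2 : ¬(R u j ∧ R i u)) :
    (({(u,i),(i,u),(u,j),(j,u)} : Finset (α×α)).filter (fun p => R p.1 p.2)).card ≤ 2 := by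
  have e : ({(u,i),(i,u),(u,j),(j,u)} : Finset (α×α))
      = insert (u,i) (insert (i,u) (insert (u,j) {(j,u)})) := rfl
  rw [Finset.card_filter, e,
    Finset.sum_insert (by simp [Prod.ext_iff]; tauto),
    Finset.sum_insert (by simp [Prod.ext_iff]; tauto),
    Finset.sum_insert (by simp [Prod.ext_iff]; tauto),
    Finset.sum_singleton]
  split_ifs <;> first | omega | tauto

lemma digraph_bound (R : α → α → Prop) [DecidableRel R]
    (htri : ∀ i j k : α, i ≠ j → j ≠ k → k ≠ i → R i j → R j k → R k i → False)
    (s : Finset α) :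
    (s.offDiag.filter fun p => R p.1 p.2).card ≤ 2 * (s.card^2/4) := by
  induction s using Finset.strongInduction with
  | _ s ih =>
  by_cases hcyc : ∃ i ∈ s, ∃ j ∈ s, i ≠ j ∧ R i j ∧ R j i
  · obtain ⟨i, hi, j, hj, hij, hRij, hRji⟩ := hcyc
    set s' := (s.erase i).erase j with hs'
    have hj' : j ∈ s.erase i := mem_erase.2 ⟨Ne.symm hij, hj⟩
    have hsub : s' ⊆ s := (erase_subset _ _).trans (erase_subset _ _)
    have hss : s' ⊂ s := Finset.ssubset_of_subset_of_ssubset (erase_subset _ _) (erase_ssubset hi)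
    have hcard' : s'.card = s.card - 2 := by
      rw [hs', card_erase_of_mem hj', card_erase_of_mem hi]; omega
    have hm : 2 ≤ s.card := by
      have := Finset.one_lt_card.mpr ⟨i, hi, j, hj, hij⟩; omega
    have hF' := ih s' hss
    set F := s.offDiag.filter fun p : α×α => R p.1 p.2 with hF
    set F' := s'.offDiag.filter fun p : α×α => R p.1 p.2 with hF'def
    have hFF : F' ⊆ F := by
      intro p hp
      simp only [hF, hF'def, mem_filter, mem_offDiag] at *
      exact ⟨⟨hsub hp.1.1, hsub hp.1.2.1, hp.1.2.2⟩, hp.2⟩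
    have hRest : F \ F' ⊆ (s'.biUnion fun u =>
        ({(u,i),(i,u),(u,j),(j,u)} : Finset (α×α)).filter fun p => R p.1 p.2)
        ∪ ({(i,j),(j,i)} : Finset (α×α)) := by
      intro p hp
      simp only [hF, hF'def, mem_sdiff, mem_filter, mem_offDiag, not_and] at hp
      obtain ⟨⟨⟨h1s, h2s, hne⟩, hPp⟩, hnot⟩ := hp
      have hmem : ¬ (p.1 ∈ s' ∧ p.2 ∈ s') := by
        intro ⟨ha, hb⟩; exact hnot ⟨ha, hb, hne⟩ hPp
      have h1 : p.1 = i ∨ p.1 = j ∨ p.1 ∈ s' := by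
        by_cases e1 : p.1 = i; · tauto
        by_cases e2 : p.1 = j; · tauto
        exact Or.inr (Or.inr (by simp [hs', mem_erase, e1, e2, h1s]))
      have h2 : p.2 = i ∨ p.2 = j ∨ p.2 ∈ s' := by
        by_cases e1 : p.2 = i; · tauto
        by_cases e2 : p.2 = j; · tauto
        exact Or.inr (Or.inr (by simp [hs', mem_erase, e1, e2, h2s]))
      simp only [mem_union, mem_biUnion, mem_filter, mem_insert, mem_singleton]
      have hpe : p = (p.1, p.2) := rfl
      rcases h1 with e1 | e1 | e1 <;> rcases h2 with e2 | e2 | e2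
      · exact absurd (e1.trans e2.symm) hne
      · right; left; rw [hpe, e1, e2]
      · exact Or.inl ⟨p.2, e2, Or.inr (Or.inl (by rw [hpe, e1])), hPp⟩
      · right; right; rw [hpe, e1, e2]
      · exact absurd (e1.trans e2.symm) hne
      · exact Or.inl ⟨p.2, e2, Or.inr (Or.inr (Or.inr (by rw [hpe, e1]))), hPp⟩
      · exact Or.inl ⟨p.1, e1, Or.inl (by rw [hpe, e2]), hPp⟩
      · exact Or.inl ⟨p.1, e1, Or.inr (Or.inr (Or.inl (by rw [hpe, e2]))), hPp⟩
      · exact absurd ⟨e1, e2⟩ hmem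
    have hTcard : ∀ u ∈ s', (({(u,i),(i,u),(u,j),(j,u)} : Finset (α×α)).filter
        fun p => R p.1 p.2).card ≤ 2 := by
      intro u hu
      have hui : u ≠ i := by simp [hs', mem_erase] at hu; tauto
      have huj : u ≠ j := by simp [hs', mem_erase] at hu; tauto
      exact Tfilter_card R u i j hui huj hij
        (fun ⟨ha, hb⟩ => htri u i j hui hij (Ne.symm huj) ha hRij hb)
        (fun ⟨ha, hb⟩ => htri u j i huj (Ne.symm hij) (Ne.symm hui) ha hRji hb)
    have hRestCard : (F \ F').card ≤ 2 * s'.card + 2 := by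
      calc (F \ F').card ≤ _ := card_le_card hRest
        _ ≤ (s'.biUnion fun u => ({(u,i),(i,u),(u,j),(j,u)} : Finset (α×α)).filter
              fun p => R p.1 p.2).card + ({(i,j),(j,i)} : Finset (α×α)).card :=
            card_union_le _ _
        _ ≤ 2 * s'.card + 2 := by
            gcongr ?_ + ?_
            · calc _ ≤ ∑ u ∈ s', (({(u,i),(i,u),(u,j),(j,u)} : Finset (α×α)).filter
                    fun p => R p.1 p.2).card := card_biUnion_le
                _ ≤ ∑ _u ∈ s', 2 := Finset.sum_le_sum hTcard
                _ = 2 * s'.card := by rw [Finset.sum_const]; ring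
            · exact (card_insert_le _ _).trans (by simp)
    have hsplit : (F \ F').card + F'.card = F.card := card_sdiff_add_card_eq_card hFF
    rw [hcard'] at hF' hRestCard
    exact arith1 s.card F.card F'.card hm hF' (by omega)
  · push_neg at hcyc
    set F := s.offDiag.filter fun p : α×α => R p.1 p.2 with hF
    set Fs := s.offDiag.filter fun p : α×α => R p.2 p.1 with hFs
    have hcardswap : Fs.card = F.card := by
      apply Finset.card_nbij' Prod.swap Prod.swap
      · intro p hp
        simp only [hF, hFs, mem_coe, mem_filter, mem_offDiag] at *
        exact ⟨⟨hp.1.2.1, hp.1.1, Ne.symm hp.1.2.2⟩, hp.2⟩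
      · intro p hp
        simp only [hF, hFs, mem_coe, mem_filter, mem_offDiag] at *
        exact ⟨⟨hp.1.2.1, hp.1.1, Ne.symm hp.1.2.2⟩, hp.2⟩
      · intro p _; simp
      · intro p _; simp
    have hdisj : Disjoint F Fs := by
      rw [Finset.disjoint_left]
      intro p hp hp'
      simp only [hF, hFs, mem_filter, mem_offDiag] at hp hp'
      exact hcyc p.1 hp.1.1 p.2 hp.1.2.1 hp.1.2.2 hp.2 hp'.2
    have hsub : F ∪ Fs ⊆ s.offDiag := union_subset (filter_subset _ _) (filter_subset _ _)
    have h2c : 2 * F.card ≤ s.offDiag.card := by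
      have := card_le_card hsub
      rw [card_union_of_disjoint hdisj, hcardswap] at this
      omega
    rw [Finset.offDiag_card] at h2c
    exact arith2 _ _ h2c


variable {n a b : ℕ}

lemma qedge_left (i j : Fin n) : qedge i j a b i = a := if_pos rfl

lemma qedge_right {i j : Fin n} (hij : i ≠ j) : qedge i j a b j = b := by
  simp [qedge, Ne.symm hij]

lemma qedge_zero {i j t : Fin n} (hti : t ≠ i) (htj : t ≠ j) : qedge i j a b t = 0 := by
  simp [qedge, hti, htj]

lemma qedge_cases {i j t : Fin n} (ht : qedge i j a b t ≠ 0) : t = i ∨ t = j := by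
  by_contra hc
  push_neg at hc
  exact ht (qedge_zero hc.1 hc.2)

lemma qsupport_qedge {i j : Fin n} (hij : i ≠ j) (ha : a ≠ 0) (hb : b ≠ 0) :
    qsupport (qedge i j a b) = {i, j} := by
  ext t
  simp only [qsupport, mem_filter, mem_univ, true_and, mem_insert, mem_singleton, qedge]
  by_cases h1 : t = i <;> by_cases h2 : t = j <;> simp_all [Finset.mem_filter.{0}, eq_comm]

lemma qedge_sum {q : ℕ} (ha : 1 ≤ a) (hab : a < b) (hsum : a + b = q + 1)
    {i j k t : Fin n} (hij : i ≠ j) (hjk : j ≠ k) (hki : k ≠ i)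
    (hx : qedge i j a b t ≠ 0) (hy : qedge j k a b t ≠ 0) :
    qedge i j a b t + qedge j k a b t = q + 1 := by
  rcases qedge_cases hx with rfl | rfl
  · rcases qedge_cases hy with h | h
    · exact absurd h hij
    · exact absurd h (Ne.symm hki)
  · rw [qedge_right hij, qedge_left]
    omega

lemma triangle_free {q : ℕ} (ha : 1 ≤ a) (hab : a < b) (hsum : a + b = q + 1)
    (H : Finset (Fin n → ℕ))
    (hfree : ¬ ContainsSCopy (q + 1) (⊤ : SimpleGraph (Fin 3)) H)
    (i j k : Fin n) (hij : i ≠ j) (hjk : j ≠ k) (hki : k ≠ i)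
    (h1 : qedge i j a b ∈ H) (h2 : qedge j k a b ∈ H) (h3 : qedge k i a b ∈ H) : False := by
  have ha0 : a ≠ 0 := by omega
  have hb0 : b ≠ 0 := by omega
  have hs1 : qsupport (qedge i j a b) = {i, j} := qsupport_qedge hij ha0 hb0
  have hs2 : qsupport (qedge j k a b) = {j, k} := qsupport_qedge hjk ha0 hb0
  have hs3 : qsupport (qedge k i a b) = {k, i} := qsupport_qedge hki ha0 hb0
  have hd12 : qedge i j a b ≠ qedge j k a b := by
    intro h
    have := congrFun h i
    rw [qedge_left, qedge_zero hij (Ne.symm hki)] at this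
    omega
  have hd13 : qedge i j a b ≠ qedge k i a b := by
    intro h
    have := congrFun h j
    rw [qedge_right hij, qedge_zero hjk (Ne.symm hij)] at this
    omega
  have hd23 : qedge j k a b ≠ qedge k i a b := by
    intro h
    have := congrFun h j
    rw [qedge_left, qedge_zero hjk (Ne.symm hij)] at this
    omega
  apply hfree
  refine ⟨{qedge i j a b, qedge j k a b, qedge k i a b}, ?_, ![i, j, k], ?_, ?_, ?_, ?_⟩
  · intro x hx
    simp only [mem_insert, mem_singleton] at hx
    rcases hx with rfl | rfl | rfl <;> assumption
  · intro u v huv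
    fin_cases u <;> fin_cases v <;> simp_all <;> tauto
  · intro u v
    constructor
    · intro hadj
      rw [SimpleGraph.top_adj] at hadj
      fin_cases u <;> fin_cases v <;> simp_all
      · exact Or.inr (Or.inr (pair_comm k i))
      · exact Or.inl (pair_comm i j)
      · exact Or.inr (Or.inl (pair_comm j k))
    · rintro ⟨x, hx, hs⟩
      rw [SimpleGraph.top_adj]
      intro huv
      subst huv
      have hc2 : (qsupport x).card = 2 := by
        simp only [mem_insert, mem_singleton] at hx
        rcases hx with rfl | rfl | rfl
        · rw [hs1]; exact card_pair hij
        · rw [hs2]; exact card_pair hjk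
        · rw [hs3]; exact card_pair hki
      rw [hs] at hc2
      simp at hc2
  · rw [Nat.card_eq_fintype_card]
    rw [card_insert_of_notMem (by simp [hd12, hd13]),
        card_insert_of_notMem (by simp [hd23]), card_singleton]
    decide
  · intro x hx y hy hxy t hxt hyt
    simp only [mem_insert, mem_singleton] at hx hy
    rcases hx with rfl | rfl | rfl <;> rcases hy with rfl | rfl | rfl
    · exact absurd rfl hxy
    · have := qedge_sum ha hab hsum hij hjk hki hxt hyt; omega
    · have := qedge_sum ha hab hsum hki hij hjk hyt hxt; omega
    · have := qedge_sum ha hab hsum hij hjk hki hyt hxt; omega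
    · exact absurd rfl hxy
    · have := qedge_sum ha hab hsum hjk hki hij hxt hyt; omega
    · have := qedge_sum ha hab hsum hki hij hjk hxt hyt; omega
    · have := qedge_sum ha hab hsum hjk hki hij hyt hxt; omega
    · exact absurd rfl hxy

end Aux

/-- If `a < b`, `a + b = q + 1` and `H` has no `(q+1)`-copy of the triangle, then the
directed graph `H⃗_{a,b}` has at most `2·⌊n²/4⌋` arcs. -/
theorem arcs_bound (n q a b : ℕ) (ha : 1 ≤ a) (hab : a < b) (hb : b ≤ q)
    (hsum : a + b = q + 1)
    (H : Finset (Fin n → ℕ)) (hH : H ⊆ Qset q n)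
    (hfree : ¬ ContainsSCopy (q + 1) (⊤ : SimpleGraph (Fin 3)) H) :
    ((Finset.univ : Finset (Fin n × Fin n)).filter
      (fun p => p.1 ≠ p.2 ∧ qedge p.1 p.2 a b ∈ H)).card ≤ 2 * (n ^ 2 / 4) := by
  classical
  have htri : ∀ i j k : Fin n, i ≠ j → j ≠ k → k ≠ i →
      qedge i j a b ∈ H → qedge j k a b ∈ H → qedge k i a b ∈ H → False := by
    intro i j k hij hjk hki h1 h2 h3
    exact triangle_free ha hab hsum H hfree i j k hij hjk hki h1 h2 h3
  have key := digraph_bound (fun i j : Fin n => qedge i j a b ∈ H) htri (univ : Finset (Fin n))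
  have heq : ((Finset.univ : Finset (Fin n × Fin n)).filter
      (fun p => p.1 ≠ p.2 ∧ qedge p.1 p.2 a b ∈ H))
      = (univ : Finset (Fin n)).offDiag.filter (fun p => qedge p.1 p.2 a b ∈ H) := by
    ext p
    simp [Finset.mem_offDiag]
  rw [heq]
  simpa using key
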